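/- Let H be a complex Hilbert space, P an orthogonal projection on H, and g, h unitary operators on H such that gPg⁻¹ - P and hPh⁻¹ - P are compact. Then (gh)P(gh)⁻¹ - P is compact, and ind(P(gh)P : im P → im P) = ind(PgP : im P → im P) + ind(PhP : im P → im P), where ind denotes the Fredholm index. -/

import Mathlib

open ContinuousLinearMap

/-- The Fredholm index of a bounded operator: `dim ker - dim coker`. -/
noncomputable def fredholmIndex {E F : Type*} [NormedAddCommGroup E] [NormedSpace ℂ E]
    [NormedAddCommGroup F] [NormedSpace ℂ F] (T : E →L[ℂ] F) : ℤ :=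
  (Module.finrank ℂ (LinearMap.ker (T : E →ₗ[ℂ] F)) : ℤ) - Module.finrank ℂ (F ⧸ LinearMap.range (T : E →ₗ[ℂ] F))

/-- The Toeplitz-type operator `P T P` viewed as an operator from `im P` to `im P`. -/
noncomputable def toeplitzOp {H : Type*} [NormedAddCommGroup H] [InnerProductSpace ℂ H]
    [CompleteSpace H] (P T : H →L[ℂ] H) :
    ↥(LinearMap.range (P : H →ₗ[ℂ] H)) →L[ℂ] ↥(LinearMap.range (P : H →ₗ[ℂ] H)) :=
  ((P.comp (T.comp (LinearMap.range (P : H →ₗ[ℂ] H)).subtypeL))).codRestrict (LinearMap.range (P : H →ₗ[ℂ] H))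
    (fun x => LinearMap.mem_range_self (P : H →ₗ[ℂ] H) _)

namespace TIA
open Module Submodule LinearMap

variable {E₁ E₂ : Type*} [AddCommGroup E₁] [Module ℂ E₁] [AddCommGroup E₂] [Module ℂ E₂]

lemma fd_of_ker_range (f : E₁ →ₗ[ℂ] E₂) (h1 : FiniteDimensional ℂ (ker f))
    (h2 : FiniteDimensional ℂ (range f)) : FiniteDimensional ℂ E₁ := by
  have hq : FiniteDimensional ℂ (E₁ ⧸ ker f) := Module.Finite.equiv f.quotKerEquivRange.symm
  have h1' : IsNoetherian ℂ (ker f) := IsNoetherian.iff_fg.mpr h1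
  have h2' : IsNoetherian ℂ (E₁ ⧸ ker f) := IsNoetherian.iff_fg.mpr hq
  exact IsNoetherian.iff_fg.mp ((isNoetherian_iff_submodule_quotient (ker f)).mpr ⟨h1', h2'⟩)

variable {E : Type*} [AddCommGroup E] [Module ℂ E]

lemma fd_quot_of_le {A B : Submodule ℂ E} (hAB : A ≤ B) (h : FiniteDimensional ℂ (E ⧸ A)) :
    FiniteDimensional ℂ (E ⧸ B) :=
  Module.Finite.equiv (quotientQuotientEquivQuotient A B hAB)

lemma finrank_quot_tower {A B : Submodule ℂ E} (hAB : A ≤ B) (h : FiniteDimensional ℂ (E ⧸ A)) :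
    finrank ℂ (E ⧸ A) = finrank ℂ (E ⧸ B) + finrank ℂ (B.map A.mkQ) := by
  have e := quotientQuotientEquivQuotient A B hAB
  have h2 := Submodule.finrank_quotient_add_finrank (R := ℂ) (M := E ⧸ A) (B.map A.mkQ)
  rw [e.finrank_eq] at h2
  omega

/-- comap of subtype equals comap of the intersection, hence equiv with the intersection. -/
lemma comap_subtype_equiv (p q : Submodule ℂ E) :
    Nonempty (↥(comap q.subtype p) ≃ₗ[ℂ] ↥(p ⊓ q)) := by
  have h : comap q.subtype p = comap q.subtype (p ⊓ q) := by
    ext x; simp [Submodule.mem_comap, x.2]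
  rw [h]
  exact ⟨comapSubtypeEquivOfLe inf_le_right⟩

theorem index_additive (f g : E →ₗ[ℂ] E)
    (hkf : FiniteDimensional ℂ (ker f)) (hcf : FiniteDimensional ℂ (E ⧸ range f))
    (hkg : FiniteDimensional ℂ (ker g)) (hcg : FiniteDimensional ℂ (E ⧸ range g)) :
    FiniteDimensional ℂ (ker (g ∘ₗ f)) ∧ FiniteDimensional ℂ (E ⧸ range (g ∘ₗ f)) ∧
    (finrank ℂ (ker (g ∘ₗ f)) : ℤ) - finrank ℂ (E ⧸ range (g ∘ₗ f))
      = ((finrank ℂ (ker g) : ℤ) - finrank ℂ (E ⧸ range g))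
        + ((finrank ℂ (ker f) : ℤ) - finrank ℂ (E ⧸ range f)) := by
  classical
  set N : Submodule ℂ E := ker (g ∘ₗ f) with hN
  -- φ : N → ker g, x ↦ f x
  have hφmem : ∀ x : N, f.domRestrict N x ∈ ker g := by
    intro x
    have hx : (g ∘ₗ f) ↑x = 0 := x.2
    simpa only [LinearMap.mem_ker, LinearMap.domRestrict_apply, ← LinearMap.comp_apply] using hx
  set φ : N →ₗ[ℂ] ↥(ker g) := (f.domRestrict N).codRestrict (ker g) hφmem with hφ
  have hkerφ : ker φ = comap N.subtype (ker f) := by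
    rw [hφ, LinearMap.ker_codRestrict]
    ext x; simp [LinearMap.mem_ker]
  have hkerf_le : ker f ≤ N := by
    intro x hx
    simp only [hN, LinearMap.mem_ker, LinearMap.comp_apply] at *
    rw [hx]; simp
  have ekerφ : ↥(ker φ) ≃ₗ[ℂ] ↥(ker f) := by
    rw [hkerφ]; exact comapSubtypeEquivOfLe hkerf_le
  have hrangeφ : range φ = comap (ker g).subtype (range f) := by
    ext y
    constructor
    · rintro ⟨x, rfl⟩
      simp [hφ, Submodule.mem_comap]
    · rintro ⟨x, hx⟩
      have hxN : x ∈ N := by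
        simp only [hN, LinearMap.mem_ker, LinearMap.comp_apply, hx]
        exact y.2
      exact ⟨⟨x, hxN⟩, by apply Subtype.ext; simpa [hφ] using hx⟩
  obtain ⟨erφ⟩ := comap_subtype_equiv (range f) (ker g)
  have erangeφ : ↥(range φ) ≃ₗ[ℂ] ↥(range f ⊓ ker g) := hrangeφ ▸ erφ
  have hkN : FiniteDimensional ℂ N := by
    have h1 : FiniteDimensional ℂ (ker φ) := Module.Finite.equiv ekerφ.symm
    have h2 : FiniteDimensional ℂ (range φ) := by
      have : FiniteDimensional ℂ (range f ⊓ ker g : Submodule ℂ E) :=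
        Submodule.finiteDimensional_of_le (K := ℂ) inf_le_right
      exact Module.Finite.equiv erangeφ.symm
    exact fd_of_ker_range φ h1 h2
  have hdimN : finrank ℂ N = finrank ℂ (ker f) + finrank ℂ (range f ⊓ ker g : Submodule ℂ E) := by
    have := LinearMap.finrank_range_add_finrank_ker φ
    rw [erangeφ.finrank_eq, ekerφ.finrank_eq] at this
    omega
  -- cokernel analysis
  set R : Submodule ℂ E := range (g ∘ₗ f) with hR
  have hRmap : R = map g (range f) := by rw [hR, LinearMap.range_comp]
  set ψ : E →ₗ[ℂ] (E ⧸ R) := R.mkQ ∘ₗ g with hψ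
  have hkerψ : ker ψ = range f ⊔ ker g := by
    rw [hψ, LinearMap.ker_comp, Submodule.ker_mkQ, hRmap, Submodule.comap_map_eq]
  have hrangeψ : range ψ = (range g).map R.mkQ := by
    rw [hψ, LinearMap.range_comp]
  have eψ : (E ⧸ (range f ⊔ ker g)) ≃ₗ[ℂ] ↥(range ψ) := hkerψ ▸ ψ.quotKerEquivRange
  have hfd_sup : FiniteDimensional ℂ (E ⧸ (range f ⊔ ker g)) := fd_quot_of_le le_sup_left hcf
  have hfd_rψ : FiniteDimensional ℂ (range ψ) := Module.Finite.equiv eψ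
  have hfd_mapRg : FiniteDimensional ℂ ((range g).map R.mkQ) := by
    rw [← hrangeψ]; exact hfd_rψ
  have hle_R_g : R ≤ range g := by rw [hRmap]; exact LinearMap.map_le_range
  have etop : ((E ⧸ R) ⧸ ((range g).map R.mkQ)) ≃ₗ[ℂ] E ⧸ range g :=
    quotientQuotientEquivQuotient R (range g) hle_R_g
  have hfd_cokerR : FiniteDimensional ℂ (E ⧸ R) := by
    have h2 : FiniteDimensional ℂ ((E ⧸ R) ⧸ ((range g).map R.mkQ)) :=
      Module.Finite.equiv etop.symm
    have h1' : IsNoetherian ℂ ((range g).map R.mkQ) := IsNoetherian.iff_fg.mpr hfd_mapRg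
    have h2' : IsNoetherian ℂ ((E ⧸ R) ⧸ ((range g).map R.mkQ)) := IsNoetherian.iff_fg.mpr h2
    exact IsNoetherian.iff_fg.mp ((isNoetherian_iff_submodule_quotient _).mpr ⟨h1', h2'⟩)
  have hdimcoker : finrank ℂ (E ⧸ R)
      = finrank ℂ (E ⧸ range g) + finrank ℂ (E ⧸ (range f ⊔ ker g)) := by
    have ht := finrank_quot_tower hle_R_g hfd_cokerR
    have h2 : finrank ℂ ((range g).map R.mkQ) = finrank ℂ (E ⧸ (range f ⊔ ker g)) := by
      rw [← hrangeψ]; exact eψ.symm.finrank_eq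
    omega
  -- μ : ker g → E ⧸ range f
  set μ : ↥(ker g) →ₗ[ℂ] (E ⧸ range f) := (range f).mkQ.domRestrict (ker g) with hμ
  have hkerμ : ker μ = comap (ker g).subtype (range f) := by
    rw [hμ]; ext x
    simp [LinearMap.mem_ker, Submodule.Quotient.mk_eq_zero]
  obtain ⟨eμ⟩ := comap_subtype_equiv (range f) (ker g)
  have hdim_kg : finrank ℂ (ker g)
      = finrank ℂ (range f ⊓ ker g : Submodule ℂ E) + finrank ℂ (range μ) := by
    have h1 := LinearMap.finrank_range_add_finrank_ker μ
    have e2 : finrank ℂ (ker μ) = finrank ℂ (range f ⊓ ker g : Submodule ℂ E) := by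
      rw [hkerμ]; exact eμ.finrank_eq
    omega
  have hdim_cf : finrank ℂ (E ⧸ range f)
      = finrank ℂ (E ⧸ (range f ⊔ ker g)) + finrank ℂ (range μ) := by
    have ht := finrank_quot_tower (le_sup_left : range f ≤ range f ⊔ ker g) hcf
    have hmap : (range f ⊔ ker g).map (range f).mkQ = range μ := by
      rw [Submodule.map_sup, hμ, LinearMap.range_domRestrict]
      have hbot : (range f).map (range f).mkQ = ⊥ := by
        ext x
        simp only [Submodule.mem_map, Submodule.mem_bot]
        constructor
        · rintro ⟨y, hy, rfl⟩
          simpa [Submodule.mkQ_apply, Submodule.Quotient.mk_eq_zero] using hy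
        · rintro rfl
          exact ⟨0, by simp, by simp⟩
      rw [hbot, bot_sup_eq]
    rw [hmap] at ht
    omega
  refine ⟨hkN, hfd_cokerR, ?_⟩
  rw [hdimN]
  omega



theorem index_one_add (T : E →ₗ[ℂ] E) (V : Submodule ℂ E) (hfV : FiniteDimensional ℂ V)
    (hT : ∀ x, T x - x ∈ V) :
    FiniteDimensional ℂ (ker T) ∧ FiniteDimensional ℂ (E ⧸ range T) ∧
    finrank ℂ (ker T) = finrank ℂ (E ⧸ range T) := by
  classical
  have hTV : ∀ v ∈ V, T v ∈ V := by
    intro v hv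
    have : T v = (T v - v) + v := by abel
    rw [this]
    exact V.add_mem (hT v) hv
  set TV : ↥V →ₗ[ℂ] ↥V := T.restrict hTV with hTVdef
  have hkle : ker T ≤ V := by
    intro x hx
    rw [LinearMap.mem_ker] at hx
    have : x = -(T x - x) := by rw [hx]; abel
    rw [this]
    exact V.neg_mem (hT x)
  have ekT : ↥(ker TV) ≃ₗ[ℂ] ↥(ker T) := by
    rw [hTVdef, LinearMap.ker_restrict]
    exact comapSubtypeEquivOfLe hkle
  have hfdker : FiniteDimensional ℂ (ker T) := Module.Finite.equiv ekT
  set ν : ↥V →ₗ[ℂ] (E ⧸ range T) := (range T).mkQ.domRestrict V with hν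
  have hνsurj : Function.Surjective ⇑ν := by
    intro y
    obtain ⟨x, rfl⟩ := (range T).mkQ_surjective y
    have hxV : x - T x ∈ V := by
      have := V.neg_mem (hT x)
      simpa using this
    refine ⟨⟨x - T x, hxV⟩, ?_⟩
    rw [hν]
    simp only [LinearMap.domRestrict_apply, Submodule.mkQ_apply]
    rw [Submodule.Quotient.eq]
    exact ⟨-x, by rw [map_neg]; abel⟩
  have hfdcoker : FiniteDimensional ℂ (E ⧸ range T) := Module.Finite.of_surjective ν hνsurj
  have hkerν : ker ν = range TV := by
    ext x
    rw [hν, hTVdef]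
    simp only [LinearMap.mem_ker, LinearMap.domRestrict_apply, Submodule.mkQ_apply,
      Submodule.Quotient.mk_eq_zero, LinearMap.mem_range]
    constructor
    · rintro ⟨y, hy⟩
      have hyV : y ∈ V := by
        have : y = ↑x - (T y - y) := by rw [hy]; abel
        rw [this]
        exact V.sub_mem x.2 (hT y)
      exact ⟨⟨y, hyV⟩, Subtype.ext (by simp [LinearMap.restrict_apply, hy])⟩
    · rintro ⟨y, rfl⟩
      exact ⟨↑y, by simp [LinearMap.restrict_apply]⟩
  have h1 := LinearMap.finrank_range_add_finrank_ker ν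
  have h2 := LinearMap.finrank_range_add_finrank_ker TV
  have h3 : finrank ℂ (range ν) = finrank ℂ (E ⧸ range T) := by
    rw [(LinearMap.range_eq_top.mpr hνsurj)]
    exact LinearEquiv.finrank_eq (Submodule.topEquiv)
  have h4 : finrank ℂ (ker ν) = finrank ℂ (range TV) := by rw [hkerν]
  have h5 : finrank ℂ (ker TV) = finrank ℂ (ker T) := ekT.finrank_eq
  exact ⟨hfdker, hfdcoker, by omega⟩



variable {E : Type*} [NormedAddCommGroup E] [NormedSpace ℂ E]
open Module Submodule

theorem clm_index_comp (T S : E →L[ℂ] E)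
    (hkT : FiniteDimensional ℂ (LinearMap.ker (T : E →ₗ[ℂ] E)))
    (hcT : FiniteDimensional ℂ (E ⧸ LinearMap.range (T : E →ₗ[ℂ] E)))
    (hkS : FiniteDimensional ℂ (LinearMap.ker (S : E →ₗ[ℂ] E)))
    (hcS : FiniteDimensional ℂ (E ⧸ LinearMap.range (S : E →ₗ[ℂ] E))) :
    FiniteDimensional ℂ (LinearMap.ker ((S.comp T) : E →ₗ[ℂ] E)) ∧
    FiniteDimensional ℂ (E ⧸ LinearMap.range ((S.comp T) : E →ₗ[ℂ] E)) ∧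
    fredholmIndex (S.comp T) = fredholmIndex S + fredholmIndex T := by
  have h := index_additive (E := E) (T : E →ₗ[ℂ] E) (S : E →ₗ[ℂ] E) hkT hcT hkS hcS
  exact h

theorem clm_index_units (u : (E →L[ℂ] E)ˣ) :
    FiniteDimensional ℂ (LinearMap.ker ((u : E →L[ℂ] E) : E →ₗ[ℂ] E)) ∧
    FiniteDimensional ℂ (E ⧸ LinearMap.range ((u : E →L[ℂ] E) : E →ₗ[ℂ] E)) ∧
    fredholmIndex (u : E →L[ℂ] E) = 0 := by
  have hinj : Function.Injective ⇑(u : E →L[ℂ] E) := by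
    intro x y hxy
    have h1 : (↑u⁻¹ * ↑u : E →L[ℂ] E) = 1 := by simp
    have h2 := congrArg (fun f : E →L[ℂ] E => f x) h1
    have h3 := congrArg (fun f : E →L[ℂ] E => f y) h1
    simp only [ContinuousLinearMap.mul_apply, ContinuousLinearMap.one_apply] at h2 h3
    rw [← h2, ← h3, hxy]
  have hsurj : Function.Surjective ⇑(u : E →L[ℂ] E) := by
    intro y
    refine ⟨(↑u⁻¹ : E →L[ℂ] E) y, ?_⟩
    have h1 : (↑u * ↑u⁻¹ : E →L[ℂ] E) = 1 := by simp
    have h2 := congrArg (fun f : E →L[ℂ] E => f y) h1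
    simpa only [ContinuousLinearMap.mul_apply, ContinuousLinearMap.one_apply] using h2
  have hker : LinearMap.ker ((u : E →L[ℂ] E) : E →ₗ[ℂ] E) = ⊥ := LinearMap.ker_eq_bot.mpr hinj
  have hrange : LinearMap.range ((u : E →L[ℂ] E) : E →ₗ[ℂ] E) = ⊤ := LinearMap.range_eq_top.mpr hsurj
  have hsub : Subsingleton (E ⧸ LinearMap.range ((u : E →L[ℂ] E) : E →ₗ[ℂ] E)) := by
    rw [hrange]
    exact Submodule.Quotient.subsingleton_iff.mpr rfl
  haveI := hsub
  refine ⟨by rw [hker]; infer_instance, by infer_instance, ?_⟩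
  unfold fredholmIndex
  rw [hker, finrank_bot, finrank_zero_of_subsingleton]
  simp

end TIA

namespace TIA
section Hilbert
set_option linter.unusedSectionVars false
variable {E : Type*} [NormedAddCommGroup E] [InnerProductSpace ℂ E] [CompleteSpace E]
open Module Submodule Metric

theorem compact_split (K : E →L[ℂ] E) (hK : IsCompactOperator ⇑K) :
    ∃ F S : E →L[ℂ] E, K = F + S ∧ FiniteDimensional ℂ (LinearMap.range (F : E →ₗ[ℂ] E)) ∧ ‖S‖ < 1 := by
  have hcomp : IsCompact (closure (⇑K '' closedBall 0 1)) :=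
    hK.isCompact_closure_image_closedBall 1
  have htb : TotallyBounded (closure (⇑K '' closedBall 0 1)) := hcomp.totallyBounded
  obtain ⟨t, htfin, htcov⟩ := (Metric.totallyBounded_iff.mp htb) (1/2) (by norm_num)
  set V : Submodule ℂ E := Submodule.span ℂ t with hV
  haveI hfV : FiniteDimensional ℂ V := FiniteDimensional.span_of_finite ℂ htfin
  set Q : E →L[ℂ] E := V.subtypeL.comp (orthogonalProjection V) with hQ
  refine ⟨Q.comp K, K - Q.comp K, by abel, ?_, ?_⟩
  · have hle : LinearMap.range ((Q.comp K) : E →ₗ[ℂ] E) ≤ V := by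
      rintro y ⟨x, rfl⟩
      exact ((orthogonalProjection V) (K x)).2
    exact Submodule.finiteDimensional_of_le hle
  · have hbound : ∀ x : E, ‖(K - Q.comp K) x‖ ≤ (1/2) * ‖x‖ := by
      -- first prove it on the closed unit ball
      have hball : ∀ x : E, ‖x‖ ≤ 1 → ‖(K - Q.comp K) x‖ ≤ 1/2 := by
        intro x hx
        have hKx : K x ∈ closure (⇑K '' closedBall 0 1) :=
          subset_closure ⟨x, by simpa [Metric.mem_closedBall, dist_eq_norm] using hx, rfl⟩
        obtain ⟨y, hyt, hy⟩ := by simpa using htcov hKx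
        have hyV : y ∈ V := Submodule.subset_span hyt
        have hmin : ‖K x - ↑((orthogonalProjection V) (K x))‖ ≤ ‖K x - y‖ := by
          rw [show ‖K x - ↑((orthogonalProjection V) (K x))‖ = ⨅ z : V, ‖K x - z‖ from Submodule.starProjection_minimal (K x)]
          exact ciInf_le ⟨0, by rintro _ ⟨z, rfl⟩; positivity⟩ (⟨y, hyV⟩ : V)
        have : ‖(K - Q.comp K) x‖ = ‖K x - ↑((orthogonalProjection V) (K x))‖ := by
          simp [hQ]
        rw [this]
        calc ‖K x - ↑((orthogonalProjection V) (K x))‖ ≤ ‖K x - y‖ := hmin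
          _ ≤ 1/2 := by
            rw [dist_eq_norm] at hy
            linarith
      intro x
      rcases eq_or_ne x 0 with rfl | hx0
      · simp
      · have hn : ‖x‖ ≠ 0 := norm_ne_zero_iff.mpr hx0
        set c : ℂ := (‖x‖ : ℂ)⁻¹ with hc
        have hcx : ‖c • x‖ ≤ 1 := by
          rw [norm_smul, hc]
          simp [norm_inv, inv_mul_cancel₀ hn]
        have h1 := hball (c • x) hcx
        rw [map_smul, norm_smul] at h1
        have hcnorm : ‖c‖ = ‖x‖⁻¹ := by
          rw [hc, norm_inv]
          simp
        rw [hcnorm] at h1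
        have h2 : ‖x‖⁻¹ * ‖(K - Q.comp K) x‖ ≤ 1/2 := h1
        calc ‖(K - Q.comp K) x‖ = ‖x‖ * (‖x‖⁻¹ * ‖(K - Q.comp K) x‖) := by
              field_simp
          _ ≤ ‖x‖ * (1/2) := by
              apply mul_le_mul_of_nonneg_left h2 (norm_nonneg x)
          _ = (1/2) * ‖x‖ := by ring
    have : ‖K - Q.comp K‖ ≤ 1/2 :=
      ContinuousLinearMap.opNorm_le_bound _ (by norm_num) hbound
    linarith

theorem one_add_compact (K : E →L[ℂ] E) (hK : IsCompactOperator ⇑K) :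
    FiniteDimensional ℂ (LinearMap.ker ((1 + K : E →L[ℂ] E) : E →ₗ[ℂ] E)) ∧
    FiniteDimensional ℂ (E ⧸ LinearMap.range ((1 + K : E →L[ℂ] E) : E →ₗ[ℂ] E)) ∧
    fredholmIndex (1 + K) = 0 := by
  obtain ⟨F, S, hKFS, hfdF, hS⟩ := compact_split K hK
  set u : (E →L[ℂ] E)ˣ := Units.oneSub (-S) (by rwa [norm_neg]) with hu
  have huval : (↑u : E →L[ℂ] E) = 1 + S := by
    show (1 : E →L[ℂ] E) - (-S) = 1 + S
    abel
  set G : E →L[ℂ] E := (↑u⁻¹ : E →L[ℂ] E).comp F with hG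
  have hfact : 1 + K = (↑u : E →L[ℂ] E).comp (1 + G) := by
    rw [← ContinuousLinearMap.mul_def]
    have : (↑u : E →L[ℂ] E) * (1 + G) = ↑u + (↑u * ↑u⁻¹) * F := by
      rw [hG, ← ContinuousLinearMap.mul_def]
      noncomm_ring
    rw [this]
    have huu : (↑u * ↑u⁻¹ : E →L[ℂ] E) = 1 := by simp
    rw [huu, huval, hKFS]
    noncomm_ring
  -- 1 + G has finite-rank perturbation of identity
  have hfdG : FiniteDimensional ℂ (LinearMap.range (G : E →ₗ[ℂ] E)) := by
    have : LinearMap.range (G : E →ₗ[ℂ] E) = (LinearMap.range (F : E →ₗ[ℂ] E)).map ((↑u⁻¹ : E →L[ℂ] E) : E →ₗ[ℂ] E) := by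
      rw [hG]
      exact LinearMap.range_comp _ _
    rw [this]
    exact (inferInstance : FiniteDimensional ℂ
      ((LinearMap.range (F : E →ₗ[ℂ] E)).map ((↑u⁻¹ : E →L[ℂ] E) : E →ₗ[ℂ] E)))
  have h1G := index_one_add (E := E) ((1 + G : E →L[ℂ] E) : E →ₗ[ℂ] E) (LinearMap.range (G : E →ₗ[ℂ] E)) hfdG
    (fun x => by
      have : ((1 + G : E →L[ℂ] E) : E →ₗ[ℂ] E) x - x = G x := by
        simp
      rw [this]
      exact LinearMap.mem_range_self _ x)
  obtain ⟨hk1G, hc1G, hind1G⟩ := h1G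
  have ekr : LinearMap.ker (((1 + G : E →L[ℂ] E)) : E →ₗ[ℂ] E)
      = LinearMap.ker ((1 + G : E →L[ℂ] E) : E →ₗ[ℂ] E) := rfl
  have erg : LinearMap.range (((1 + G : E →L[ℂ] E)) : E →ₗ[ℂ] E)
      = LinearMap.range ((1 + G : E →L[ℂ] E) : E →ₗ[ℂ] E) := rfl
  rw [ekr] at hk1G hind1G
  rw [erg] at hc1G hind1G
  have hind1G' : fredholmIndex (1 + G) = 0 := by
    unfold fredholmIndex
    omega
  obtain ⟨hku, hcu, hindu⟩ := clm_index_units u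
  have hcomp := clm_index_comp (1 + G) (↑u : E →L[ℂ] E) hk1G hc1G hku hcu
  obtain ⟨hk, hc, hind⟩ := hcomp
  rw [← hfact] at hk hc hind
  exact ⟨hk, hc, by rw [hind, hindu, hind1G']; ring⟩

theorem fred_of_parametrix (T S : E →L[ℂ] E)
    (h1 : IsCompactOperator ⇑(S.comp T - 1)) (h2 : IsCompactOperator ⇑(T.comp S - 1)) :
    FiniteDimensional ℂ (LinearMap.ker (T : E →ₗ[ℂ] E)) ∧ FiniteDimensional ℂ (E ⧸ LinearMap.range (T : E →ₗ[ℂ] E)) := by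
  have e1 : (1 : E →L[ℂ] E) + (S.comp T - 1) = S.comp T := by abel
  obtain ⟨hk1, hc1, -⟩ := one_add_compact (S.comp T - 1) h1
  rw [e1] at hk1 hc1
  have e2 : (1 : E →L[ℂ] E) + (T.comp S - 1) = T.comp S := by abel
  obtain ⟨hk2, hc2, -⟩ := one_add_compact (T.comp S - 1) h2
  rw [e2] at hk2 hc2
  constructor
  · have hle : LinearMap.ker (T : E →ₗ[ℂ] E) ≤ LinearMap.ker ((S.comp T) : E →ₗ[ℂ] E) := by
      intro x hx
      rw [LinearMap.mem_ker] at hx ⊢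
      rw [ContinuousLinearMap.coe_coe] at hx ⊢
      rw [ContinuousLinearMap.comp_apply, hx, map_zero]
    exact Submodule.finiteDimensional_of_le hle
  · have hle : LinearMap.range ((T.comp S) : E →ₗ[ℂ] E) ≤ LinearMap.range (T : E →ₗ[ℂ] E) := by
      rintro y ⟨x, rfl⟩
      exact ⟨S x, rfl⟩
    set σ := Submodule.mapQ (LinearMap.range ((T.comp S) : E →ₗ[ℂ] E)) (LinearMap.range (T : E →ₗ[ℂ] E)) LinearMap.id
      (fun x hx => hle hx) with hσ
    have hσs : Function.Surjective ⇑σ := by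
      intro y
      obtain ⟨x, rfl⟩ := (LinearMap.range (T : E →ₗ[ℂ] E)).mkQ_surjective y
      refine ⟨(LinearMap.range ((T.comp S) : E →ₗ[ℂ] E)).mkQ x, ?_⟩
      rw [hσ]
      exact Submodule.mapQ_apply _ _ _ x
    exact Module.Finite.of_surjective σ hσs

theorem parametrix_index (T S : E →L[ℂ] E)
    (h1 : IsCompactOperator ⇑(S.comp T - 1)) (h2 : IsCompactOperator ⇑(T.comp S - 1)) :
    fredholmIndex T + fredholmIndex S = 0 := by
  obtain ⟨hkT, hcT⟩ := fred_of_parametrix T S h1 h2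
  obtain ⟨hkS, hcS⟩ := fred_of_parametrix S T h2 h1
  obtain ⟨-, -, hadd⟩ := clm_index_comp T S hkT hcT hkS hcS
  obtain ⟨-, -, hind⟩ := one_add_compact (S.comp T - 1) h1
  have e1 : (1 : E →L[ℂ] E) + (S.comp T - 1) = S.comp T := by abel
  rw [e1, hadd] at hind
  omega

end Hilbert

end TIA


lemma compactL {E : Type*} [NormedAddCommGroup E] [NormedSpace ℂ E]
    (a X : E →L[ℂ] E) (hX : IsCompactOperator ⇑X) : IsCompactOperator ⇑(a.comp X) := by
  rw [ContinuousLinearMap.coe_comp']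
  exact hX.clm_comp a

lemma compactR {E : Type*} [NormedAddCommGroup E] [NormedSpace ℂ E]
    (X b : E →L[ℂ] E) (hX : IsCompactOperator ⇑X) : IsCompactOperator ⇑(X.comp b) := by
  rw [ContinuousLinearMap.coe_comp']
  exact hX.comp_clm b


/-- Logarithmic property of the Toeplitz index: if `P` is an orthogonal projection and
`g`, `h` are unitaries with `gPg⁻¹ - P` and `hPh⁻¹ - P` compact, then
`(gh)P(gh)⁻¹ - P` is compact and
`ind (P(gh)P) = ind (PgP) + ind (PhP)` on `im P`. -/
theorem toeplitz_index_additive {H : Type*} [NormedAddCommGroup H]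
    [InnerProductSpace ℂ H] [CompleteSpace H]
    (P g h : H →L[ℂ] H) (hPsa : IsSelfAdjoint P) (hPidem : P.comp P = P)
    (hg : g ∈ unitary (H →L[ℂ] H)) (hh : h ∈ unitary (H →L[ℂ] H))
    (hgc : IsCompactOperator ⇑(g * P * star g - P))
    (hhc : IsCompactOperator ⇑(h * P * star h - P)) :
    IsCompactOperator ⇑((g * h) * P * star (g * h) - P) ∧
    fredholmIndex (toeplitzOp P (g * h))
      = fredholmIndex (toeplitzOp P g) + fredholmIndex (toeplitzOp P h) := by

  classical
  -- basic unitary facts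
  obtain ⟨hg1, hg2⟩ := Unitary.mem_iff.mp hg
  obtain ⟨hh1, hh2⟩ := Unitary.mem_iff.mp hh
  have happ : ∀ (u v : H →L[ℂ] H), u * v = 1 → ∀ y, u (v y) = y := by
    intro u v huv y
    have := congrArg (fun f : H →L[ℂ] H => f y) huv
    simpa [ContinuousLinearMap.mul_apply] using this
  -- conjugation preserves compactness
  have hconj : ∀ (a b X : H →L[ℂ] H), IsCompactOperator ⇑X →
      IsCompactOperator ⇑(a * X * b) := by
    intro a b X hX
    have h1 : ⇑(a * X * b) = ⇑a ∘ (⇑X ∘ ⇑b) := by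
      simp only [ContinuousLinearMap.mul_def, ContinuousLinearMap.coe_comp']
      rfl
    rw [h1]
    exact (hX.comp_clm b).clm_comp a
  -- Part 1 : compactness of the product defect
  have hsplit : (g * h) * P * star (g * h)- P
      = g * ((h * P * star h - P) * star g) + (g * P * star g - P) := by
    rw [star_mul]
    noncomm_ring
  have hpart1 : IsCompactOperator ⇑((g * h) * P * star (g * h) - P) := by
    rw [hsplit]
    have h1 : IsCompactOperator ⇑(g * ((h * P * star h - P) * star g)) := by
      have := hconj g (star g) _ hhc
      rwa [mul_assoc] at this
    have h2 := h1.add hgc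
    rwa [← ContinuousLinearMap.coe_add'] at h2
  refine ⟨hpart1, ?_⟩
  -- Part 2 : the index identity
  -- instances on im P
  have hPapply : ∀ x : H, x ∈ LinearMap.range (P : H →ₗ[ℂ] H) → P x = x := by
    rintro _ ⟨y, rfl⟩
    have := congrArg (fun f : H →L[ℂ] H => f y) hPidem
    simpa using this
  have hclosed : IsClosed ((LinearMap.range (P : H →ₗ[ℂ] H) : Submodule ℂ H) : Set H) := by
    have heq : ((LinearMap.range (P : H →ₗ[ℂ] H) : Submodule ℂ H) : Set H) = {x | P x = x} := by
      ext x
      simp only [SetLike.mem_coe, Set.mem_setOf_eq]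
      exact ⟨fun hx => hPapply x hx, fun hx => ⟨x, hx⟩⟩
    rw [heq]
    exact isClosed_eq P.continuous continuous_id
  haveI : CompleteSpace ↥(LinearMap.range (P : H →ₗ[ℂ] H)) := hclosed.completeSpace_coe
  -- generic: difference of Toeplitz-type operators is compact if induced by compact W
  have hdiff : ∀ (A B : ↥(LinearMap.range (P : H →ₗ[ℂ] H)) →L[ℂ] ↥(LinearMap.range (P : H →ₗ[ℂ] H))) (W : H →L[ℂ] H),
      IsCompactOperator ⇑W → (∀ x : ↥(LinearMap.range (P : H →ₗ[ℂ] H)), ((A - B) x : H) = W ↑x) →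
      IsCompactOperator ⇑(A - B) := by
    intro A B W hW hABW
    have hf : IsCompactOperator (⇑W ∘ ⇑(LinearMap.range (P : H →ₗ[ℂ] H)).subtypeL) := hW.comp_clm _
    have hmem : ∀ x : ↥(LinearMap.range (P : H →ₗ[ℂ] H)),
        (⇑W ∘ ⇑(LinearMap.range (P : H →ₗ[ℂ] H)).subtypeL) x ∈ LinearMap.range (P : H →ₗ[ℂ] H) := by
      intro x
      have := hABW x
      simp only [Function.comp_apply, Submodule.subtypeL_apply]
      rw [← this]
      exact ((A - B) x).2
    have hcr := hf.codRestrict hmem hclosed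
    have : ⇑(A - B) = Set.codRestrict (⇑W ∘ ⇑(LinearMap.range (P : H →ₗ[ℂ] H)).subtypeL)
        (LinearMap.range (P : H →ₗ[ℂ] H)) hmem := by
      funext x
      apply Subtype.ext
      exact hABW x
    rw [this]
    exact hcr
  -- pointwise facts
  have hTop : ∀ (T : H →L[ℂ] H) (x : ↥(LinearMap.range (P : H →ₗ[ℂ] H))),
      ((toeplitzOp P T) x : H) = P (T ↑x) := fun T x => rfl
  have hPx : ∀ x : ↥(LinearMap.range (P : H →ₗ[ℂ] H)), P ↑x = (↑x : H) := fun x => hPapply ↑x x.2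
  -- star-conjugated compactness
  have hstar : ∀ u : H →L[ℂ] H, star u * u = 1 → u * star u = 1 →
      IsCompactOperator ⇑(u * P * star u - P) →
      IsCompactOperator ⇑(star u * P * u - P) := by
    intro u hu1 hu2 huc
    have heq : star u * P * u - P = -(star u * ((u * P * star u - P) * u)) := by
      ext x
      simp only [ContinuousLinearMap.mul_apply, ContinuousLinearMap.sub_apply,
        ContinuousLinearMap.neg_apply, map_sub]
      rw [happ (star u) u hu1, happ (star u) u hu1]
      abel
    rw [heq]
    have h1 : IsCompactOperator ⇑(star u * ((u * P * star u - P) * u)) := by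
      have := hconj (star u) u _ huc
      rwa [mul_assoc] at this
    have h2 := h1.neg
    rwa [← ContinuousLinearMap.coe_neg'] at h2
  have hgsc := hstar g hg1 hg2 hgc
  have hhsc := hstar h hh1 hh2 hhc
  -- two-sided compact parametrix property of Toeplitz operators of unitaries
  have hpara : ∀ u : H →L[ℂ] H, star u * u = 1 →
      IsCompactOperator ⇑(u * P * star u - P) → IsCompactOperator ⇑(star u * P * u - P) →
      IsCompactOperator ⇑((toeplitzOp P u).comp (toeplitzOp P (star u)) - 1) ∧
      IsCompactOperator ⇑((toeplitzOp P (star u)).comp (toeplitzOp P u) - 1) := by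
    intro u hu1 huc husc
    constructor
    · apply hdiff _ _ (P.comp (u * P * star u - P))
      · exact compactL P _ huc
      · intro x
        simp only [ContinuousLinearMap.sub_apply, AddSubgroupClass.coe_sub,
          ContinuousLinearMap.one_apply, ContinuousLinearMap.comp_apply,
          ContinuousLinearMap.mul_apply, map_sub, hTop, hPx]
    · apply hdiff _ _ (P.comp (star u * P * u - P))
      · exact compactL P _ husc
      · intro x
        simp only [ContinuousLinearMap.sub_apply, AddSubgroupClass.coe_sub,
          ContinuousLinearMap.one_apply, ContinuousLinearMap.comp_apply,
          ContinuousLinearMap.mul_apply, map_sub, hTop, hPx]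
  obtain ⟨hgp1, hgp2⟩ := hpara g hg1 hgc hgsc
  obtain ⟨hhp1, hhp2⟩ := hpara h hh1 hhc hhsc
  -- Fredholm property of the Toeplitz operators
  have hFA := TIA.fred_of_parametrix (toeplitzOp P g) (toeplitzOp P (star g)) hgp2 hgp1
  have hFB := TIA.fred_of_parametrix (toeplitzOp P h) (toeplitzOp P (star h)) hhp2 hhp1
  obtain ⟨-, -, hABind⟩ :=
    TIA.clm_index_comp (toeplitzOp P h) (toeplitzOp P g) hFB.1 hFB.2 hFA.1 hFA.2
  -- compact defect of the product
  have hD : IsCompactOperator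
      ⇑(toeplitzOp P (g * h) - (toeplitzOp P g).comp (toeplitzOp P h)) := by
    apply hdiff _ _ (P.comp ((g.comp ((h * P * star h - P))).comp h))
    · exact compactL P _ (compactL g _ (compactR _ h hhc))
    · intro x
      simp only [ContinuousLinearMap.sub_apply, AddSubgroupClass.coe_sub,
        ContinuousLinearMap.comp_apply, ContinuousLinearMap.mul_apply, map_sub,
        hTop, hPx, happ (star h) h hh1]
  -- two-sided compact parametrix for the composition
  have hS1 : IsCompactOperator ⇑(((toeplitzOp P g).comp (toeplitzOp P h)).comp
      ((toeplitzOp P (star h)).comp (toeplitzOp P (star g))) - 1) := by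
    have e : ((toeplitzOp P g).comp (toeplitzOp P h)).comp
        ((toeplitzOp P (star h)).comp (toeplitzOp P (star g))) - 1
        = (toeplitzOp P g).comp
            (((toeplitzOp P h).comp (toeplitzOp P (star h)) - 1).comp (toeplitzOp P (star g)))
          + ((toeplitzOp P g).comp (toeplitzOp P (star g)) - 1) := by
      simp only [← ContinuousLinearMap.mul_def]
      simp only [sub_mul, mul_sub, mul_one, one_mul, mul_assoc]
      abel
    rw [e]
    have h1 := compactL (toeplitzOp P g) _ (compactR _ (toeplitzOp P (star g)) hhp1)
    have h2 := h1.add hgp1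
    rwa [← ContinuousLinearMap.coe_add'] at h2
  have hS2 : IsCompactOperator ⇑(((toeplitzOp P (star h)).comp (toeplitzOp P (star g))).comp
      ((toeplitzOp P g).comp (toeplitzOp P h)) - 1) := by
    have e : ((toeplitzOp P (star h)).comp (toeplitzOp P (star g))).comp
        ((toeplitzOp P g).comp (toeplitzOp P h)) - 1
        = (toeplitzOp P (star h)).comp
            (((toeplitzOp P (star g)).comp (toeplitzOp P g) - 1).comp (toeplitzOp P h))
          + ((toeplitzOp P (star h)).comp (toeplitzOp P h) - 1) := by
      simp only [← ContinuousLinearMap.mul_def]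
      simp only [sub_mul, mul_sub, mul_one, one_mul, mul_assoc]
      abel
    rw [e]
    have h1 := compactL (toeplitzOp P (star h)) _ (compactR _ (toeplitzOp P h) hgp2)
    have h2 := h1.add hhp2
    rwa [← ContinuousLinearMap.coe_add'] at h2
  have hpair1 := TIA.parametrix_index ((toeplitzOp P g).comp (toeplitzOp P h))
    ((toeplitzOp P (star h)).comp (toeplitzOp P (star g))) hS2 hS1
  -- same parametrix works for toeplitzOp P (g * h)
  have hCS : IsCompactOperator ⇑((toeplitzOp P (g * h)).comp
      ((toeplitzOp P (star h)).comp (toeplitzOp P (star g))) - 1) := by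
    have e : (toeplitzOp P (g * h)).comp
        ((toeplitzOp P (star h)).comp (toeplitzOp P (star g))) - 1
        = (((toeplitzOp P g).comp (toeplitzOp P h)).comp
            ((toeplitzOp P (star h)).comp (toeplitzOp P (star g))) - 1)
          + (toeplitzOp P (g * h) - (toeplitzOp P g).comp (toeplitzOp P h)).comp
              ((toeplitzOp P (star h)).comp (toeplitzOp P (star g))) := by
      simp only [← ContinuousLinearMap.mul_def]
      simp only [sub_mul, mul_sub, mul_one, one_mul, mul_assoc]
      abel
    rw [e]
    have h2 := hS1.add (compactR _ ((toeplitzOp P (star h)).comp (toeplitzOp P (star g))) hD)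
    rwa [← ContinuousLinearMap.coe_add'] at h2
  have hSC : IsCompactOperator ⇑(((toeplitzOp P (star h)).comp (toeplitzOp P (star g))).comp
      (toeplitzOp P (g * h)) - 1) := by
    have e : ((toeplitzOp P (star h)).comp (toeplitzOp P (star g))).comp
        (toeplitzOp P (g * h)) - 1
        = (((toeplitzOp P (star h)).comp (toeplitzOp P (star g))).comp
            ((toeplitzOp P g).comp (toeplitzOp P h)) - 1)
          + ((toeplitzOp P (star h)).comp (toeplitzOp P (star g))).comp
              (toeplitzOp P (g * h) - (toeplitzOp P g).comp (toeplitzOp P h)) := by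
      simp only [← ContinuousLinearMap.mul_def]
      simp only [sub_mul, mul_sub, mul_one, one_mul, mul_assoc]
      abel
    rw [e]
    have h2 := hS2.add (compactL ((toeplitzOp P (star h)).comp (toeplitzOp P (star g))) _ hD)
    rwa [← ContinuousLinearMap.coe_add'] at h2
  have hpair2 := TIA.parametrix_index (toeplitzOp P (g * h))
    ((toeplitzOp P (star h)).comp (toeplitzOp P (star g))) hSC hCS
  omega
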